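/- Let P₁ = (I 0) and P₂ = (A b) be two non-coincident finite cameras (A ∈ ℝ^{3×3} nonsingular, b ∈ ℝ³ nonzero). If (x,y) ∈ ℝ²×ℝ² is (A,b)-regular and ŷᵀ [b]_× A x̂ = 0, then there exists w ∈ ℝ⁴∖{0} such that P₁ w is a nonzero scalar multiple of x̂ and P₂ w is a nonzero scalar multiple of ŷ. -/

import Mathlib

open Matrix

noncomputable section

/-- For `u ∈ ℝⁿ`, `hat u = (u, 1)ᵀ ∈ ℝⁿ⁺¹`. -/
def hat {n : ℕ} (u : Fin n → ℝ) : Fin (n + 1) → ℝ := Fin.snoc u 1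

/-- The 3×4 matrix `(A b)` with left 3×3 block `A` and last column `b`. -/
def cam (A : Matrix (Fin 3) (Fin 3) ℝ) (b : Fin 3 → ℝ) : Matrix (Fin 3) (Fin 4) ℝ :=
  Matrix.of fun i => Fin.snoc (A i) (b i)

/-- The left 3×3 block of a 3×4 matrix. -/
def leftBlock (P : Matrix (Fin 3) (Fin 4) ℝ) : Matrix (Fin 3) (Fin 3) ℝ :=
  P.submatrix id Fin.castSucc

/-- A (projective) camera is a real 3×4 matrix of rank 3. -/
def IsCamera (P : Matrix (Fin 3) (Fin 4) ℝ) : Prop := P.rank = 3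

/-- A finite camera: the left 3×3 block is nonsingular. -/
def IsFiniteCamera (P : Matrix (Fin 3) (Fin 4) ℝ) : Prop := IsUnit (leftBlock P).det

/-- Two cameras are coincident if their camera centers agree up to a nonzero scale;
for rank-3 cameras the center is the (one-dimensional) kernel, so this says the two
cameras share a common nonzero kernel vector. -/
def Coincident (P Q : Matrix (Fin 3) (Fin 4) ℝ) : Prop :=
  ∃ c : Fin 4 → ℝ, c ≠ 0 ∧ P.mulVec c = 0 ∧ Q.mulVec c = 0

/-- `u` is a nonzero scalar multiple of `v`. -/
def SimEq {n : ℕ} (u v : Fin n → ℝ) : Prop := ∃ c : ℝ, c ≠ 0 ∧ u = c • v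

/-- The skew-symmetric matrix `[v]ₓ` with `[v]ₓ w = v × w`. -/
def skew (v : Fin 3 → ℝ) : Matrix (Fin 3) (Fin 3) ℝ :=
  !![0, -v 2, v 1; v 2, 0, -v 0; -v 1, v 0, 0]

/-- `(x, y)` is `(A, b)`-irregular. -/
def Irregular (A : Matrix (Fin 3) (Fin 3) ℝ) (b : Fin 3 → ℝ) (x y : Fin 2 → ℝ) : Prop :=
  ((skew b * A).mulVec (hat x) = 0 ∧ Matrix.vecMul (hat y) (skew b) ≠ 0) ∨
  ((skew b * A).mulVec (hat x) ≠ 0 ∧ Matrix.vecMul (hat y) (skew b) = 0)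

lemma skew_mulVec (b u : Fin 3 → ℝ) : (skew b).mulVec u = crossProduct b u := by
  funext i
  fin_cases i <;>
    simp [skew, Matrix.mulVec, dotProduct, Fin.sum_univ_three, crossProduct] <;> ring

lemma skew_vecMul (y b : Fin 3 → ℝ) : Matrix.vecMul y (skew b) = -(skew b).mulVec y := by
  funext i
  fin_cases i <;>
    simp [skew, Matrix.vecMul, Matrix.mulVec, dotProduct, Fin.sum_univ_three] <;> ring

lemma cam_apply_cast (A : Matrix (Fin 3) (Fin 3) ℝ) (b : Fin 3 → ℝ) (i : Fin 3) (j : Fin 3) :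
    cam A b i j.castSucc = A i j := by simp [cam]

lemma cam_apply_last (A : Matrix (Fin 3) (Fin 3) ℝ) (b : Fin 3 → ℝ) (i : Fin 3) :
    cam A b i (Fin.last 3) = b i := by simp only [cam, Matrix.of_apply, Fin.snoc_last]

lemma cam_mulVec (A : Matrix (Fin 3) (Fin 3) ℝ) (b : Fin 3 → ℝ) (v : Fin 3 → ℝ) (t : ℝ) :
    (cam A b).mulVec (Fin.snoc v t) = A.mulVec v + t • b := by
  funext i
  have h0 : (0 : Fin 4) = (0 : Fin 3).castSucc := rfl
  have h1 : (1 : Fin 4) = (1 : Fin 3).castSucc := rfl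
  have h2 : (2 : Fin 4) = (2 : Fin 3).castSucc := rfl
  have h3 : (3 : Fin 4) = Fin.last 3 := rfl
  simp only [Matrix.mulVec, dotProduct, Fin.sum_univ_four, Fin.sum_univ_three,
    Pi.add_apply, Pi.smul_apply, smul_eq_mul, h0, h1, h2, h3,
    cam_apply_cast, cam_apply_last, Fin.snoc_castSucc, Fin.snoc_last]
  ring

lemma hat_two (x : Fin 2 → ℝ) : hat x 2 = 1 := by
  rw [show (2 : Fin 3) = Fin.last 2 from rfl]
  simp only [hat, Fin.snoc_last]

lemma hat_ne_zero (x : Fin 2 → ℝ) : hat x ≠ 0 := by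
  intro h
  have := congrFun h 2
  rw [hat_two] at this
  simp at this

lemma snoc_hat_ne_zero (x : Fin 2 → ℝ) (t : ℝ) : Fin.snoc (hat x) t ≠ (0 : Fin 4 → ℝ) := by
  intro h
  have := congrFun h ((2 : Fin 3).castSucc)
  rw [Fin.snoc_castSucc, hat_two] at this
  simp at this

lemma vecMul_three (v : Fin 3 → ℝ) (a b c : Fin 3 → ℝ) :
    Matrix.vecMul v ![a, b, c] = v 0 • a + v 1 • b + v 2 • c := by
  funext j
  simp [Matrix.vecMul, dotProduct, Fin.sum_univ_three]

lemma vec3_ext {u v : Fin 3 → ℝ} (h0 : u 0 = v 0) (h1 : u 1 = v 1) (h2 : u 2 = v 2) : u = v := by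
  funext j; fin_cases j <;> assumption

lemma collinear_of_cross (b z : Fin 3 → ℝ) (hb : b ≠ 0)
    (h : (skew b).mulVec z = 0) : ∃ k : ℝ, z = k • b := by
  have e0 := congrFun h 0
  have e1 := congrFun h 1
  have e2 := congrFun h 2
  simp [skew, Matrix.mulVec, dotProduct, Fin.sum_univ_three] at e0 e1 e2
  obtain ⟨i, hi⟩ := Function.ne_iff.mp hb
  simp only [Pi.zero_apply] at hi
  fin_cases i
  · have hb0 : b 0 ≠ 0 := hi
    refine ⟨z 0 / b 0, vec3_ext ?_ ?_ ?_⟩ <;>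
      simp only [Pi.smul_apply, smul_eq_mul] <;> rw [div_mul_eq_mul_div, eq_div_iff hb0] <;>
      linarith [e0, e1, e2]
  · have hb1 : b 1 ≠ 0 := hi
    refine ⟨z 1 / b 1, vec3_ext ?_ ?_ ?_⟩ <;>
      simp only [Pi.smul_apply, smul_eq_mul] <;> rw [div_mul_eq_mul_div, eq_div_iff hb1] <;>
      linarith [e0, e1, e2]
  · have hb2 : b 2 ≠ 0 := hi
    refine ⟨z 2 / b 2, vec3_ext ?_ ?_ ?_⟩ <;>
      simp only [Pi.smul_apply, smul_eq_mul] <;> rw [div_mul_eq_mul_div, eq_div_iff hb2] <;>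
      linarith [e0, e1, e2]

/-- If `(x, y)` is `(A, b)`-regular and satisfies the epipolar constraint, then it admits
a reconstruction (possibly at infinity) by the cameras `(I 0)` and `(A b)`. -/
theorem stmt10 (A : Matrix (Fin 3) (Fin 3) ℝ) (b : Fin 3 → ℝ)
    (hA : IsUnit A.det) (hb : b ≠ 0) (x y : Fin 2 → ℝ)
    (hreg : ¬ Irregular A b x y)
    (hep : hat y ⬝ᵥ (skew b * A).mulVec (hat x) = 0) :
    ∃ w : Fin 4 → ℝ, w ≠ 0 ∧
      SimEq ((cam 1 0).mulVec w) (hat x) ∧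
      SimEq ((cam A b).mulVec w) (hat y) := by
  classical
  set u : Fin 3 → ℝ := A.mulVec (hat x) with hu
  have hmul : (skew b * A).mulVec (hat x) = (skew b).mulVec u := by
    rw [hu, Matrix.mulVec_mulVec]
  have hune : u ≠ 0 := by
    haveI := A.invertibleOfIsUnitDet hA
    intro h
    have : hat x = 0 := by
      apply Matrix.mulVec_injective_of_invertible A
      rw [← hu, h, Matrix.mulVec_zero]
    exact hat_ne_zero x this
  simp only [Irregular, not_or, not_and, not_not] at hreg
  by_cases hc : (skew b).mulVec u = 0
  · -- both epipolar quantities vanish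
    have hyb : Matrix.vecMul (hat y) (skew b) = 0 :=
      hreg.1 (by rw [hmul]; exact hc)
    have hby : (skew b).mulVec (hat y) = 0 := by
      rw [skew_vecMul, neg_eq_zero] at hyb; exact hyb
    obtain ⟨k, hk⟩ := collinear_of_cross b u hb hc
    obtain ⟨m, hm⟩ := collinear_of_cross b (hat y) hb hby
    have hk0 : k ≠ 0 := by rintro rfl; exact hune (by rw [hk, zero_smul])
    have hm0 : m ≠ 0 := by rintro rfl; exact hat_ne_zero y (by rw [hm, zero_smul])
    refine ⟨Fin.snoc (hat x) 0, snoc_hat_ne_zero x 0, ⟨1, one_ne_zero, ?_⟩,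
      ⟨k / m, div_ne_zero hk0 hm0, ?_⟩⟩
    · rw [cam_mulVec, Matrix.one_mulVec, one_smul]
      simp
    · rw [cam_mulVec, ← hu, hk, hm, smul_smul, div_mul_cancel₀ _ hm0]
      simp
  · -- generic case
    have hyb : Matrix.vecMul (hat y) (skew b) ≠ 0 := by
      intro h0
      exact hreg.2 (by rw [hmul]; exact hc) h0
    have hby : (skew b).mulVec (hat y) ≠ 0 := by
      rw [skew_vecMul] at hyb
      intro h0; exact hyb (by rw [h0, neg_zero])
    have hdet : Matrix.det (Matrix.of ![hat y, b, u]) = 0 := by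
      show Matrix.det ![hat y, b, u] = 0
      rw [← triple_product_eq_det, ← skew_mulVec]
      rw [hmul] at hep; exact hep
    obtain ⟨v, hv0, hv⟩ := Matrix.exists_vecMul_eq_zero_iff.mpr hdet
    have hv' : v 0 • hat y + v 1 • b + v 2 • u = 0 := by
      rw [← vecMul_three v (hat y) b u]
      exact hv
    clear hv
    rename' hv' => hv
    have hv2 : v 2 ≠ 0 := by
      intro h2
      rw [h2, zero_smul, add_zero] at hv
      by_cases h0 : v 0 = 0
      · rw [h0, zero_smul, zero_add] at hv
        have h1 : v 1 = 0 := by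
          by_contra h1
          rcases smul_eq_zero.mp hv with h | h
          · exact h1 h
          · exact hb h
        exact hv0 (vec3_ext (by simp [h0]) (by simp [h1]) (by simp [h2]))
      · apply hby
        have g0 := congrFun hv 0
        have g1 := congrFun hv 1
        have g2 := congrFun hv 2
        simp only [Pi.add_apply, Pi.smul_apply, smul_eq_mul, Pi.zero_apply] at g0 g1 g2
        have hy' : hat y = (-(v 1) / v 0) • b := by
          apply vec3_ext <;>
            · simp only [Pi.smul_apply, smul_eq_mul]
              field_simp
              linarith [g0, g1, g2]
        rw [hy', Matrix.mulVec_smul, skew_mulVec, cross_self, smul_zero]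
    have hv0' : v 0 ≠ 0 := by
      intro h0
      rw [h0, zero_smul, zero_add] at hv
      apply hc
      have g0 := congrFun hv 0
      have g1 := congrFun hv 1
      have g2 := congrFun hv 2
      simp only [Pi.add_apply, Pi.smul_apply, smul_eq_mul, Pi.zero_apply] at g0 g1 g2
      have hu' : u = (-(v 1) / v 2) • b := by
        apply vec3_ext <;>
          · simp only [Pi.smul_apply, smul_eq_mul]
            field_simp
            linarith [g0, g1, g2]
      rw [hu', Matrix.mulVec_smul, skew_mulVec, cross_self, smul_zero]
    refine ⟨Fin.snoc (hat x) (v 1 / v 2), snoc_hat_ne_zero x _, ⟨1, one_ne_zero, ?_⟩,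
      ⟨-(v 0) / v 2, div_ne_zero (neg_ne_zero.mpr hv0') hv2, ?_⟩⟩
    · rw [cam_mulVec, Matrix.one_mulVec, one_smul]
      simp
    · have g0 := congrFun hv 0
      have g1 := congrFun hv 1
      have g2 := congrFun hv 2
      simp only [Pi.add_apply, Pi.smul_apply, smul_eq_mul, Pi.zero_apply] at g0 g1 g2
      rw [cam_mulVec, ← hu]
      apply vec3_ext <;>
        · simp only [Pi.add_apply, Pi.smul_apply, smul_eq_mul]
          field_simp
          linarith [g0, g1, g2]
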